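/- Fix integers $n \ge 3$ and $m = n - 1$. Let $G$ be a symmetric positive definite $m \times m$ real matrix, let $k \in \mathbb{R}^m$ and set $v = G k$, let $\kappa, \tau$ be real numbers with $\kappa\,\tau < 0$, let $N$ be a real number, and let $s_1, \dots, s_m$ be real numbers. For each $a \in \{1,\dots,m\}$ define the $n \times n$ matrix $B^{(a)} = -s_a I_n + E^{(a)}$, where $E^{(a)}$ has: row $a$ equal to $-2(N/\tau)\,v^T$ in the first $m$ columns and $\kappa N/\tau$ in column $n$; row $n$ equal to $-N$ times the $a$-th row of $G$ in the first $m$ columns and $0$ in column $n$; and all other rows zero. Then there exists a symmetric positive definite $n \times n$ real matrix $H$ such that for every $a \in \{1,\dots,m\}$ the product $H\,B^{(a)}$ is symmetric; i.e., the matrices $B^{(a)}$ admit a common symmetrizer. -/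

import Mathlib

open Matrix in

/-- Lemma 4.1 of the paper in matrix form: under the sign condition
`κ τ < 0`, the spatial coefficient matrices `B^(a)` (equation (4.10)) of the reduced
momentum constraint admit a common symmetrizer, i.e. there is a symmetric positive
definite matrix `H` such that every product `H B^(a)` is symmetric; hence the system
is first order Friedrichs symmetrizable hyperbolic. Here `G = γ̂^{AB}` is positive
definite, `v = G k`, `κ = 𝛋`, `τ = 𝐊^E{}_E`, `N` is the lapse and `s a` the shift. -/
theorem reduced_momentum_constraint_symmetrizable
    (n : ℕ) (hn : 3 ≤ n)
    (G : Matrix (Fin (n - 1)) (Fin (n - 1)) ℝ) (hG : G.PosDef)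
    (k : Fin (n - 1) → ℝ) (v : Fin (n - 1) → ℝ) (hv : v = G.mulVec k)
    (κ τ : ℝ) (hκτ : κ * τ < 0)
    (N : ℝ) (s : Fin (n - 1) → ℝ)
    (B : Fin (n - 1) → Matrix (Fin (n - 1) ⊕ Unit) (Fin (n - 1) ⊕ Unit) ℝ)
    (hB : ∀ a, B a = (-(s a)) • (1 : Matrix (Fin (n - 1) ⊕ Unit) (Fin (n - 1) ⊕ Unit) ℝ)
      + Matrix.of (fun i j =>
          match i, j with
          | Sum.inl i, Sum.inl j => if i = a then -2 * (N / τ) * v j else 0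
          | Sum.inl i, Sum.inr _ => if i = a then κ * N / τ else 0
          | Sum.inr _, Sum.inl j => -N * G a j
          | Sum.inr _, Sum.inr _ => 0)) :
    ∃ H : Matrix (Fin (n - 1) ⊕ Unit) (Fin (n - 1) ⊕ Unit) ℝ,
      H.IsSymm ∧ H.PosDef ∧ ∀ a, (H * B a).IsSymm := by
  have hκ : κ ≠ 0 := by rintro rfl; simp at hκτ
  have hτ : τ ≠ 0 := by rintro rfl; simp at hκτ
  have hα : 0 < -τ/κ := by
    rcases lt_or_gt_of_ne hκ with h | h
    · have hτp : 0 < τ := by nlinarith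
      exact div_pos_of_neg_of_neg (by linarith) h
    · have : τ < 0 := by nlinarith
      exact div_pos (by linarith) h
  have hGs : ∀ i j, G i j = G j i := fun i j => by
    have := hG.isHermitian.apply i j
    simpa using this.symm
  set H : Matrix (Fin (n - 1) ⊕ Unit) (Fin (n - 1) ⊕ Unit) ℝ :=
    Matrix.of (fun p q => match p, q with
      | Sum.inl i, Sum.inl j => (-τ/κ) * G i j + (4/κ^2) * (v i * v j)
      | Sum.inl i, Sum.inr _ => (-2/κ) * v i
      | Sum.inr _, Sum.inl j => (-2/κ) * v j
      | Sum.inr _, Sum.inr _ => 1) with hH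
  have hHapp : ∀ p q, H p q = match p, q with
      | Sum.inl i, Sum.inl j => (-τ/κ) * G i j + (4/κ^2) * (v i * v j)
      | Sum.inl i, Sum.inr _ => (-2/κ) * v i
      | Sum.inr _, Sum.inl j => (-2/κ) * v j
      | Sum.inr _, Sum.inr _ => 1 := fun p q => by rw [hH]; rfl
  refine ⟨H, ?_, ?_, ?_⟩
  · -- symmetry
    rw [Matrix.IsSymm]
    ext p q
    rw [Matrix.transpose_apply, hHapp, hHapp]
    rcases p with i | _ <;> rcases q with j | _ <;> simp only
    · rw [hGs]; ring
  · -- pos def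
    refine Matrix.PosDef.of_dotProduct_mulVec_pos ?_ ?_
    · rw [Matrix.IsHermitian]
      ext p q
      rw [Matrix.conjTranspose_apply, star_trivial, hHapp, hHapp]
      rcases p with i | _ <;> rcases q with j | _ <;> simp only
      · rw [hGs]; ring
    · intro x hx
      have hrow : ∀ i, (H *ᵥ x) (Sum.inl i)
          = (-τ/κ) * (∑ j, G i j * x (Sum.inl j))
            + (4/κ^2) * v i * (∑ j, v j * x (Sum.inl j))
            + (-2/κ) * v i * x (Sum.inr ()) := by
        intro i
        simp only [Matrix.mulVec, dotProduct, Fintype.sum_sum_type,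
          Fintype.sum_unique, hHapp]
        rw [Finset.mul_sum, Finset.mul_sum, ← Finset.sum_add_distrib]
        congr 1
        all_goals first
          | exact Finset.sum_congr rfl fun j _ => by ring
          | ring
      have hlast : (H *ᵥ x) (Sum.inr ())
          = (-2/κ) * (∑ j, v j * x (Sum.inl j)) + x (Sum.inr ()) := by
        simp only [Matrix.mulVec, dotProduct, Fintype.sum_sum_type,
          Fintype.sum_unique, hHapp]
        rw [Finset.mul_sum]
        congr 1
        · exact Finset.sum_congr rfl fun j _ => by ring
        · exact one_mul _
      have h1 : ∑ i, x (Sum.inl i) * ((H *ᵥ x) (Sum.inl i))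
          = ∑ i, ((-τ/κ) * (x (Sum.inl i) * ∑ j, G i j * x (Sum.inl j))
            + ((4/κ^2) * (∑ j, v j * x (Sum.inl j))) * (v i * x (Sum.inl i))
            + ((-2/κ) * x (Sum.inr ())) * (v i * x (Sum.inl i))) :=
        Finset.sum_congr rfl fun i _ => by rw [hrow i]; ring
      have key : dotProduct (star x) (H *ᵥ x)
          = (-τ/κ) * (∑ i, x (Sum.inl i) * ∑ j, G i j * x (Sum.inl j))
            + (x (Sum.inr ()) + (-2/κ) * ∑ j, v j * x (Sum.inl j))^2 := by
        rw [show (star x) = x from rfl]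
        simp only [dotProduct]
        rw [Fintype.sum_sum_type]
        simp only [Fintype.sum_unique]
        rw [h1, hlast, Finset.sum_add_distrib, Finset.sum_add_distrib,
          ← Finset.mul_sum, ← Finset.mul_sum, ← Finset.mul_sum]
        ring
      rw [key]
      set y : Fin (n-1) → ℝ := fun i => x (Sum.inl i) with hy
      have hsum : (∑ i, x (Sum.inl i) * ∑ j, G i j * x (Sum.inl j))
          = dotProduct y (G *ᵥ y) := rfl
      rw [hsum]
      by_cases hy0 : y = 0
      · have htne : x (Sum.inr ()) ≠ 0 := by
          intro h0
          apply hx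
          funext p
          rcases p with i | u
          · exact congrFun hy0 i
          · cases u; exact h0
        have hS0 : (∑ j, v j * x (Sum.inl j)) = 0 := by
          refine Finset.sum_eq_zero fun j _ => ?_
          rw [show x (Sum.inl j) = y j from rfl, hy0]
          simp
        rw [hy0, hS0]
        simp only [Matrix.mulVec_zero, dotProduct_zero, mul_zero, add_zero]
        have : (0:ℝ) < (x (Sum.inr ()))^2 := by positivity
        nlinarith
      · have h1 : 0 < dotProduct y (G *ᵥ y) := by
          have := hG.dotProduct_mulVec_pos hy0
          simpa using this
        nlinarith [sq_nonneg (x (Sum.inr ()) + (-2/κ) * ∑ j, v j * x (Sum.inl j)),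
          mul_pos hα h1]
  · -- products symmetric
    intro a
    rw [hB a, Matrix.IsSymm]
    ext p q
    rw [Matrix.transpose_apply, Matrix.mul_apply, Matrix.mul_apply]
    simp only [Matrix.add_apply, Matrix.smul_apply, Matrix.one_apply, Matrix.of_apply,
      Fintype.sum_sum_type, Fintype.sum_unique, smul_eq_mul, hHapp]
    rcases p with i | _ <;> rcases q with j | _ <;>
        simp only [mul_ite, ite_mul, mul_zero, zero_mul, mul_one, mul_add, add_mul,
          Finset.sum_add_distrib, Finset.sum_ite_eq', Finset.mem_univ, if_true,
          Sum.inl.injEq, reduceCtorEq, if_false, Finset.sum_const_zero, mul_neg] <;>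
      · field_simp
        try rw [hGs i j]
        try rw [hGs a i]
        try rw [hGs a j]
        try ring
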